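/- Let ω be a radial weight belonging to both D̂ and Ď (i.e., ω ∈ D), with ω̂(r) = ∫_r^1 ω(s) ds. Let 1 < p < ∞ and let η ∈ Ď be a radial weight (there exist K > 1, C > 1 with η̂(r) ≥ C·η̂(1-(1-r)/K)). Then there exists a constant c > 0 such that ∫_0^r η(s)/ω̂(s)^p ds ≥ c·η̂(r)/ω̂(r)^p for all r with 1 - 1/K ≤ r < 1. -/

import Mathlib

open MeasureTheory Set

/-- `what ω r = ∫_r^1 ω(s) ds`. -/
noncomputable def what (ω : ℝ → ℝ) (r : ℝ) : ℝ := ∫ s in r..(1:ℝ), ω s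

lemma ii_of {f : ℝ → ℝ} (hf : IntegrableOn f (Set.Ico (0:ℝ) 1))
    {a b : ℝ} (ha : 0 ≤ a) (hab : a ≤ b) (hb : b ≤ 1) :
    IntervalIntegrable f volume a b := by
  rw [intervalIntegrable_iff_integrableOn_Ioc_of_le hab,
    integrableOn_Ioc_iff_integrableOn_Ioo]
  exact hf.mono_set (fun x hx => ⟨le_trans ha hx.1.le, lt_of_lt_of_le hx.2 hb⟩)

lemma what_sub {f : ℝ → ℝ} (hf : IntegrableOn f (Set.Ico (0:ℝ) 1))
    {a b : ℝ} (ha : 0 ≤ a) (hab : a ≤ b) (hb : b ≤ 1) :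
    what f a - what f b = ∫ s in a..b, f s := by
  have h1 : IntervalIntegrable f volume a b := ii_of hf ha hab hb
  have h2 : IntervalIntegrable f volume b 1 := ii_of hf (ha.trans hab) hb le_rfl
  have := intervalIntegral.integral_add_adjacent_intervals h1 h2
  unfold what
  linarith [this]

lemma what_mono {f : ℝ → ℝ} (hf : IntegrableOn f (Set.Ico (0:ℝ) 1))
    (hnn : ∀ s ∈ Set.Ico (0:ℝ) 1, 0 ≤ f s)
    {a b : ℝ} (ha : 0 ≤ a) (hab : a ≤ b) (hb : b < 1) :
    what f b ≤ what f a := by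
  have h := what_sub hf ha hab hb.le
  have hnn' : 0 ≤ ∫ s in a..b, f s := by
    apply intervalIntegral.integral_nonneg hab
    intro x hx
    exact hnn x ⟨ha.trans hx.1, lt_of_le_of_lt hx.2 hb⟩
  linarith

lemma what_cont {f : ℝ → ℝ} (hf : IntegrableOn f (Set.Ico (0:ℝ) 1)) :
    ContinuousOn (what f) (Set.Icc (0:ℝ) 1) := by
  have h : IntegrableOn f (Set.uIcc (0:ℝ) 1) := by
    rw [Set.uIcc_of_le (by norm_num : (0:ℝ) ≤ 1),
      integrableOn_Icc_iff_integrableOn_Ico]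
    exact hf
  have := intervalIntegral.continuousOn_primitive_interval_left h
  rw [Set.uIcc_of_le (by norm_num : (0:ℝ) ≤ 1)] at this
  exact this

lemma iterDD {ω : ℝ → ℝ} {C₁ : ℝ} (hC₁ : 1 < C₁)
    (hωDD : ∀ r ∈ Set.Ico (0:ℝ) 1, what ω r ≤ C₁ * what ω ((1 + r) / 2)) (n : ℕ) :
    ∀ a ∈ Set.Ico (0:ℝ) 1, what ω a ≤ C₁ ^ n * what ω (1 - (1 - a) / 2 ^ n) := by
  induction n with
  | zero => intro a ha; simp
  | succ n ih =>
    intro a ha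
    obtain ⟨ha0, ha1⟩ := ha
    set b := 1 - (1 - a) / 2 ^ n with hb
    have h2n : (0:ℝ) < 2 ^ n := by positivity
    have hb0 : 0 ≤ b := by
      have : (1 - a) / 2 ^ n ≤ 1 - a := by
        apply div_le_self (by linarith) (one_le_pow₀ (by norm_num))
      simp only [hb]; linarith
    have hb1 : b < 1 := by
      have : 0 < (1 - a) / 2 ^ n := div_pos (by linarith) h2n
      simp only [hb]; linarith
    have hmid : (1 + b) / 2 = 1 - (1 - a) / 2 ^ (n + 1) := by
      simp only [hb]; rw [pow_succ]; field_simp; ring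
    have h1 := hωDD b ⟨hb0, hb1⟩
    rw [hmid] at h1
    have h2 := ih a ⟨ha0, ha1⟩
    have hCn : (0:ℝ) < C₁ ^ n := by positivity
    calc what ω a ≤ C₁ ^ n * what ω b := h2
      _ ≤ C₁ ^ n * (C₁ * what ω (1 - (1 - a) / 2 ^ (n + 1))) := by
          exact mul_le_mul_of_nonneg_left h1 hCn.le
      _ = C₁ ^ (n + 1) * what ω (1 - (1 - a) / 2 ^ (n + 1)) := by ring

theorem stmt_10 (p : ℝ) (hp : 1 < p)
    (ω η : ℝ → ℝ)
    (hωint : IntegrableOn ω (Set.Ico (0:ℝ) 1))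
    (hηint : IntegrableOn η (Set.Ico (0:ℝ) 1))
    (hωnn : ∀ s ∈ Set.Ico (0:ℝ) 1, 0 ≤ ω s) (hηnn : ∀ s ∈ Set.Ico (0:ℝ) 1, 0 ≤ η s)
    (hωpos : ∀ r ∈ Set.Ico (0:ℝ) 1, 0 < what ω r)
    (hηpos : ∀ r ∈ Set.Ico (0:ℝ) 1, 0 < what η r)
    (C₁ : ℝ) (hC₁ : 1 < C₁)
    (hωDD : ∀ r ∈ Set.Ico (0:ℝ) 1, what ω r ≤ C₁ * what ω ((1 + r) / 2))
    (K₁ C₂ : ℝ) (hK₁ : 1 < K₁) (hC₂ : 1 < C₂)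
    (hωDd : ∀ r ∈ Set.Ico (0:ℝ) 1, what ω r ≥ C₂ * what ω (1 - (1 - r) / K₁))
    (K C : ℝ) (hK : 1 < K) (hC : 1 < C)
    (hηDd : ∀ r ∈ Set.Ico (0:ℝ) 1, what η r ≥ C * what η (1 - (1 - r) / K)) :
    ∃ c : ℝ, 0 < c ∧ ∀ r : ℝ, 1 - 1 / K ≤ r → r < 1 →
      (∫ s in (0:ℝ)..r, η s / (what ω s) ^ p) ≥ c * what η r / (what ω r) ^ p := by
  obtain ⟨n, hn⟩ := pow_unbounded_of_one_lt K (by norm_num : (1:ℝ) < 2)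
  set M : ℝ := C₁ ^ n with hM
  have hMpos : 0 < M := pow_pos (by linarith) n
  have hMppos : 0 < M ^ p := Real.rpow_pos_of_pos hMpos p
  refine ⟨(C - 1) / M ^ p, div_pos (by linarith) hMppos, ?_⟩
  intro r hr1 hr2
  have hKpos : (0:ℝ) < K := by linarith
  have h1r : 0 < 1 - r := by linarith
  have hr0 : 0 ≤ r := by
    have : 1 / K < 1 := by rw [div_lt_one hKpos]; exact hK
    linarith
  set r' : ℝ := 1 - K * (1 - r) with hr'
  have hr'0 : 0 ≤ r' := by
    have h1 : 1 - r ≤ 1 / K := by linarith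
    have : K * (1 - r) ≤ K * (1 / K) := mul_le_mul_of_nonneg_left h1 hKpos.le
    rw [mul_one_div, div_self hKpos.ne'] at this
    simp only [hr']; linarith
  have hr'r : r' ≤ r := by
    have : 1 - r ≤ K * (1 - r) := le_mul_of_one_le_left h1r.le hK.le
    simp only [hr']; linarith
  have hr'1 : r' < 1 := by
    have : 0 < K * (1 - r) := by positivity
    simp only [hr']; linarith
  have hmem : r ∈ Set.Ico (0:ℝ) 1 := ⟨hr0, hr2⟩
  have hmem' : r' ∈ Set.Ico (0:ℝ) 1 := ⟨hr'0, hr'1⟩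
  -- η estimate
  have hηest : C * what η r ≤ what η r' := by
    have h := hηDd r' hmem'
    have heq : 1 - (1 - r') / K = r := by
      simp only [hr']; field_simp; ring
    rw [heq] at h
    exact h
  -- ω estimate : what ω r' ≤ M * what ω r
  have hωest : what ω r' ≤ M * what ω r := by
    set q : ℝ := 1 - (1 - r') / 2 ^ n with hq
    have h2n : (0:ℝ) < 2 ^ n := by positivity
    have hqr : r ≤ q := by
      have h1 : (1 - r') / 2 ^ n = K * (1 - r) / 2 ^ n := by simp only [hr']; ring_nf
      have h2 : K * (1 - r) / 2 ^ n ≤ 1 - r := by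
        rw [div_le_iff₀ h2n]
        have := mul_le_mul_of_nonneg_right hn.le h1r.le
        nlinarith
      simp only [hq]; rw [h1]; linarith
    have hq1 : q < 1 := by
      have : 0 < (1 - r') / 2 ^ n := div_pos (by linarith) h2n
      simp only [hq]; linarith
    calc what ω r' ≤ M * what ω q := iterDD hC₁ hωDD n r' hmem'
      _ ≤ M * what ω r := by
          exact mul_le_mul_of_nonneg_left (what_mono hωint hωnn hr0 hqr hq1) hMpos.le
  -- positivity facts
  have hwr : 0 < what ω r := hωpos r hmem
  have hwr' : 0 < what ω r' := hωpos r' hmem'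
  have her : 0 < what η r := hηpos r hmem
  have hwrp : 0 < (what ω r) ^ p := Real.rpow_pos_of_pos hwr p
  have hwr'p : 0 < (what ω r') ^ p := Real.rpow_pos_of_pos hwr' p
  -- integrability of the main integrand on Icc 0 r
  have hsub : Set.Icc (0:ℝ) r ⊆ Set.Ico (0:ℝ) 1 :=
    fun x hx => ⟨hx.1, lt_of_le_of_lt hx.2 hr2⟩
  have hwposIcc : ∀ s ∈ Set.Icc (0:ℝ) r, 0 < what ω s := fun s hs => hωpos s (hsub hs)
  have hgcont : ContinuousOn (fun s => ((what ω s) ^ p)⁻¹) (Set.Icc (0:ℝ) r) := by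
    apply ContinuousOn.inv₀
    · apply ContinuousOn.rpow_const
      · exact (what_cont hωint).mono (fun x hx => ⟨hx.1, (hx.2.trans hr2.le)⟩)
      · intro x hx; exact Or.inl (hwposIcc x hx).ne'
    · intro x hx; exact (Real.rpow_pos_of_pos (hwposIcc x hx) p).ne'
  have hfintIcc : IntegrableOn (fun s => η s / (what ω s) ^ p) (Set.Icc (0:ℝ) r) := by
    simp only [div_eq_mul_inv]
    exact (hηint.mono_set hsub).mul_continuousOn hgcont isCompact_Icc
  have hfii : ∀ a b : ℝ, 0 ≤ a → a ≤ b → b ≤ r →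
      IntervalIntegrable (fun s => η s / (what ω s) ^ p) volume a b := by
    intro a b ha hab hb
    rw [intervalIntegrable_iff_integrableOn_Ioc_of_le hab]
    exact hfintIcc.mono_set (fun x hx => ⟨ha.trans hx.1.le, hx.2.trans hb⟩)
  -- split the integral
  have hsplit : (∫ s in (0:ℝ)..r, η s / (what ω s) ^ p) =
      (∫ s in (0:ℝ)..r', η s / (what ω s) ^ p) +
      (∫ s in r'..r, η s / (what ω s) ^ p) :=
    (intervalIntegral.integral_add_adjacent_intervals
      (hfii 0 r' le_rfl hr'0 (hr'r.trans le_rfl))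
      (hfii r' r hr'0 hr'r le_rfl)).symm
  have hfirst : 0 ≤ ∫ s in (0:ℝ)..r', η s / (what ω s) ^ p := by
    apply intervalIntegral.integral_nonneg hr'0
    intro x hx
    have hxm : x ∈ Set.Ico (0:ℝ) 1 := ⟨hx.1, lt_of_le_of_lt (hx.2.trans hr'r) hr2⟩
    exact div_nonneg (hηnn x hxm) (Real.rpow_pos_of_pos (hωpos x hxm) p).le
  -- lower bound on the second piece
  have hsecond : (∫ s in r'..r, η s / (what ω r') ^ p) ≤
      ∫ s in r'..r, η s / (what ω s) ^ p := by
    apply intervalIntegral.integral_mono_on hr'r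
    · exact ((ii_of hηint hr'0 hr'r hr2.le).div_const _)
    · exact hfii r' r hr'0 hr'r le_rfl
    · intro x hx
      have hxm : x ∈ Set.Ico (0:ℝ) 1 := ⟨hr'0.trans hx.1, lt_of_le_of_lt hx.2 hr2⟩
      have hw1 : what ω x ≤ what ω r' :=
        what_mono hωint hωnn hr'0 hx.1 hxm.2
      have hw2 : (what ω x) ^ p ≤ (what ω r') ^ p :=
        Real.rpow_le_rpow (hωpos x hxm).le hw1 (by linarith)
      exact div_le_div_of_nonneg_left (hηnn x hxm) (Real.rpow_pos_of_pos (hωpos x hxm) p) hw2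
  have hval : (∫ s in r'..r, η s / (what ω r') ^ p) =
      (what η r' - what η r) / (what ω r') ^ p := by
    rw [intervalIntegral.integral_div, what_sub hηint hr'0 hr'r hr2.le]
  -- chain of estimates on the constant side
  have hdiff : (C - 1) * what η r ≤ what η r' - what η r := by nlinarith
  have hdenom : (what ω r') ^ p ≤ M ^ p * (what ω r) ^ p := by
    calc (what ω r') ^ p ≤ (M * what ω r) ^ p :=
          Real.rpow_le_rpow hwr'.le hωest (by linarith)
      _ = M ^ p * (what ω r) ^ p := Real.mul_rpow hMpos.le hwr.le
  have hkey : (C - 1) * what η r / (M ^ p * (what ω r) ^ p) ≤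
      (what η r' - what η r) / (what ω r') ^ p :=
    div_le_div₀ (by nlinarith) hdiff hwr'p hdenom
  have heqc : (C - 1) / M ^ p * what η r / (what ω r) ^ p =
      (C - 1) * what η r / (M ^ p * (what ω r) ^ p) := by
    field_simp
  rw [ge_iff_le, heqc, hsplit]
  calc (C - 1) * what η r / (M ^ p * (what ω r) ^ p)
      ≤ (what η r' - what η r) / (what ω r') ^ p := hkey
    _ = ∫ s in r'..r, η s / (what ω r') ^ p := hval.symm
    _ ≤ ∫ s in r'..r, η s / (what ω s) ^ p := hsecond
    _ ≤ (∫ s in (0:ℝ)..r', η s / (what ω s) ^ p) +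
        (∫ s in r'..r, η s / (what ω s) ^ p) := by linarith
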